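/- The function U(z,t) = (t² + (1+|z|²)²)^{−1/2} satisfies ∫_{ℂ×ℝ} U⁴ = π²/4, where the integral is with respect to Lebesgue measure on ℂ×ℝ ≅ ℝ³. -/

import Mathlib

open MeasureTheory Real Set Filter Topology

set_option maxHeartbeats 1000000

/-- The Jerison–Lee bubble `U(z,t) = (t² + (1+|z|²)²)^{-1/2}` on `H¹ = ℂ × ℝ`. -/
noncomputable def jerisonLeeBubble (p : ℂ × ℝ) : ℝ :=
  (p.2 ^ 2 + (1 + ‖p.1‖ ^ 2) ^ 2) ^ (-(1 / 2 : ℝ))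

lemma jlAux_integrable_inv_one_add_sq_sq :
    Integrable fun u : ℝ => ((1 + u ^ 2) ^ 2)⁻¹ := by
  refine integrable_inv_one_add_sq.mono' ?_ ?_
  · exact (Continuous.inv₀ (by fun_prop) fun u => by positivity).aestronglyMeasurable
  · refine Eventually.of_forall fun u => ?_
    rw [norm_of_nonneg (by positivity)]
    have h1 : (0:ℝ) < 1 + u ^ 2 := by positivity
    apply inv_anti₀ h1
    nlinarith

lemma jlAux_integral_inv_one_add_sq_sq :
    ∫ u : ℝ, ((1 + u ^ 2) ^ 2)⁻¹ = π / 2 := by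
  have hderiv : ∀ u : ℝ, HasDerivAt (fun u : ℝ => (u / (1 + u ^ 2) + arctan u) / 2)
      (((1 + u ^ 2) ^ 2)⁻¹) u := by
    intro u
    have h1 : (0:ℝ) < 1 + u ^ 2 := by positivity
    have hd1 : HasDerivAt (fun u : ℝ => u / (1 + u ^ 2))
        ((1 * (1 + u ^ 2) - u * (2 * u)) / (1 + u ^ 2) ^ 2) u := by
      exact (hasDerivAt_id u).div (by simpa using (hasDerivAt_pow 2 u).const_add 1) h1.ne'
    have := ((hd1.add (Real.hasDerivAt_arctan u)).div_const 2)
    refine this.congr_deriv ?_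
    field_simp
    ring
  have hbound : Tendsto (fun u : ℝ => u / (1 + u ^ 2)) atTop (𝓝 0) := by
    refine squeeze_zero_norm' ?_ tendsto_abs_atTop_atTop.inv_tendsto_atTop
    filter_upwards [eventually_gt_atTop (0:ℝ)] with u hu
    simp only [Pi.inv_apply, Real.norm_eq_abs, abs_div,
      abs_of_pos (by positivity : (0:ℝ) < 1 + u ^ 2)]
    rw [div_le_iff₀ (by positivity), inv_mul_eq_div, le_div_iff₀ (abs_pos.2 hu.ne'),
      abs_of_pos hu]
    nlinarith
  have hbound' : Tendsto (fun u : ℝ => u / (1 + u ^ 2)) atBot (𝓝 0) := by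
    refine squeeze_zero_norm' ?_ tendsto_abs_atBot_atTop.inv_tendsto_atTop
    filter_upwards [eventually_lt_atBot (0:ℝ)] with u hu
    simp only [Pi.inv_apply, Real.norm_eq_abs, abs_div,
      abs_of_pos (by positivity : (0:ℝ) < 1 + u ^ 2)]
    rw [div_le_iff₀ (by positivity), inv_mul_eq_div, le_div_iff₀ (abs_pos.2 hu.ne),
      abs_of_neg hu]
    nlinarith
  have htop : Tendsto (fun u : ℝ => (u / (1 + u ^ 2) + arctan u) / 2) atTop (𝓝 (π / 4)) := by
    have : Tendsto (fun u : ℝ => (u / (1 + u ^ 2) + arctan u) / 2) atTop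
        (𝓝 ((0 + π / 2) / 2)) :=
      ((hbound.add (Real.tendsto_arctan_atTop.mono_right nhdsWithin_le_nhds)).div_const 2)
    convert this using 2
    ring
  have hbot : Tendsto (fun u : ℝ => (u / (1 + u ^ 2) + arctan u) / 2) atBot (𝓝 (-(π / 4))) := by
    have : Tendsto (fun u : ℝ => (u / (1 + u ^ 2) + arctan u) / 2) atBot
        (𝓝 ((0 + -(π / 2)) / 2)) :=
      ((hbound'.add (Real.tendsto_arctan_atBot.mono_right nhdsWithin_le_nhds)).div_const 2)
    convert this using 2
    ring
  rw [MeasureTheory.integral_of_hasDerivAt_of_tendsto hderiv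
    jlAux_integrable_inv_one_add_sq_sq hbot htop]
  ring

lemma jlAux_integrable_slice {a : ℝ} (ha : 0 < a) :
    Integrable fun t : ℝ => ((t ^ 2 + a ^ 2) ^ 2)⁻¹ := by
  have h : Integrable fun t : ℝ => a⁻¹ ^ 4 * ((1 + (a⁻¹ * t) ^ 2) ^ 2)⁻¹ :=
    (jlAux_integrable_inv_one_add_sq_sq.comp_mul_left' (inv_ne_zero ha.ne')).const_mul _
  refine h.congr (Eventually.of_forall fun t => ?_)
  have : a ≠ 0 := ha.ne'
  field_simp
  ring

lemma jlAux_integral_slice {a : ℝ} (ha : 0 < a) :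
    ∫ t : ℝ, ((t ^ 2 + a ^ 2) ^ 2)⁻¹ = π / (2 * a ^ 3) := by
  have ha' : a ≠ 0 := ha.ne'
  have h1 : ∀ t : ℝ, ((t ^ 2 + a ^ 2) ^ 2)⁻¹ = a⁻¹ ^ 4 * ((1 + (a⁻¹ * t) ^ 2) ^ 2)⁻¹ := by
    intro t
    field_simp
    ring
  simp_rw [h1]
  rw [MeasureTheory.integral_const_mul,
    Measure.integral_comp_mul_left (fun u : ℝ => ((1 + u ^ 2) ^ 2)⁻¹) a⁻¹,
    jlAux_integral_inv_one_add_sq_sq, inv_inv, abs_of_pos ha, smul_eq_mul]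
  field_simp

lemma jlAux_integral_Ioi : ∫ r : ℝ in Ioi 0, r * ((1 + r ^ 2) ^ 3)⁻¹ = 1 / 4 := by
  have hderiv : ∀ r ∈ Ici (0:ℝ),
      HasDerivAt (fun r : ℝ => -(((1 + r ^ 2) ^ 2)⁻¹ / 4)) (r * ((1 + r ^ 2) ^ 3)⁻¹) r := by
    intro r _
    have h1 : (0:ℝ) < 1 + r ^ 2 := by positivity
    have hd : HasDerivAt (fun r : ℝ => (1 + r ^ 2) ^ 2) (2 * (1 + r ^ 2) ^ 1 * (2 * r)) r := by
      simpa using (((hasDerivAt_pow 2 r).const_add 1).fun_pow 2)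
    have := ((hd.inv (by positivity)).div_const 4).neg
    refine this.congr_deriv ?_
    field_simp
    ring
  have g'pos : ∀ r ∈ Ioi (0:ℝ), 0 ≤ r * ((1 + r ^ 2) ^ 3)⁻¹ := fun r hr => by
    have : (0:ℝ) < r := hr
    positivity
  have htop : Tendsto (fun r : ℝ => -(((1 + r ^ 2) ^ 2)⁻¹ / 4)) atTop (𝓝 0) := by
    have h : Tendsto (fun r : ℝ => (1 + r ^ 2) ^ 2) atTop atTop := by
      apply Filter.tendsto_atTop_mono (fun r => ?_) tendsto_id
      simp only [id_eq]
      nlinarith [sq_nonneg (r - 1), sq_nonneg r, sq_nonneg (r ^ 2 - r)]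
    have := (h.inv_tendsto_atTop.div_const 4).neg
    simpa using this
  have := integral_Ioi_of_hasDerivAt_of_nonneg' hderiv g'pos htop
  rw [this]
  norm_num

lemma jlAux_integral_complex : ∫ z : ℂ, ((1 + ‖z‖ ^ 2) ^ 3)⁻¹ = π / 2 := by
  rw [← Complex.integral_comp_polarCoord_symm fun z => ((1 + ‖z‖ ^ 2) ^ 3)⁻¹]
  have heq : ∀ p ∈ polarCoord.target,
      p.1 • ((1 + ‖Complex.polarCoord.symm p‖ ^ 2) ^ 3)⁻¹
        = p.1 * ((1 + p.1 ^ 2) ^ 3)⁻¹ * 1 := by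
    intro p _
    rw [smul_eq_mul, mul_one, Complex.norm_polarCoord_symm, sq_abs]
  rw [setIntegral_congr_fun (polarCoord.open_target.measurableSet) heq, polarCoord_target]
  calc ∫ x : ℝ × ℝ in Ioi 0 ×ˢ Ioo (-π) π, x.1 * ((1 + x.1 ^ 2) ^ 3)⁻¹ * 1
      = (∫ r : ℝ in Ioi 0, r * ((1 + r ^ 2) ^ 3)⁻¹) * ∫ _ : ℝ in Ioo (-π) π, (1:ℝ) := by
        rw [← setIntegral_prod_mul, Measure.volume_eq_prod]
    _ = π / 2 := by
        rw [jlAux_integral_Ioi]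
        simp only [integral_const, Measure.restrict_apply MeasurableSet.univ, Set.univ_inter,
          volume_Ioo, smul_eq_mul, mul_one]
        rw [measureReal_restrict_apply_univ, Real.volume_real_Ioo_of_le (by linarith [Real.pi_pos] : -π ≤ π)]
        ring

lemma jlAux_pow_eq (p : ℂ × ℝ) :
    (jerisonLeeBubble p) ^ 4 = (((p.2 ^ 2 + (1 + ‖p.1‖ ^ 2) ^ 2) ^ 2)⁻¹) := by
  unfold jerisonLeeBubble
  have hx : (0:ℝ) < p.2 ^ 2 + (1 + ‖p.1‖ ^ 2) ^ 2 := by positivity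
  rw [← Real.rpow_natCast (_ ^ (-(1/2 : ℝ))) 4, ← Real.rpow_mul hx.le,
    show (-(1/2 : ℝ)) * (4:ℕ) = -2 by norm_num, Real.rpow_neg hx.le, Real.rpow_two]

theorem integral_jerisonLeeBubble_fourth :
    ∫ p : ℂ × ℝ, (jerisonLeeBubble p) ^ 4 = π ^ 2 / 4 := by
  simp_rw [jlAux_pow_eq]
  have hmeas : AEStronglyMeasurable
      (fun p : ℂ × ℝ => (((p.2 ^ 2 + (1 + ‖p.1‖ ^ 2) ^ 2) ^ 2)⁻¹))
      ((volume : Measure ℂ).prod (volume : Measure ℝ)) := by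
    exact (Continuous.inv₀ (by fun_prop) fun p => by positivity).aestronglyMeasurable
  have hz : ∀ z : ℂ, (0:ℝ) < 1 + ‖z‖ ^ 2 := fun z => by positivity
  have hslice : ∀ z : ℂ, Integrable fun t : ℝ => (((t ^ 2 + (1 + ‖z‖ ^ 2) ^ 2) ^ 2)⁻¹) :=
    fun z => jlAux_integrable_slice (hz z)
  have hsliceval : ∀ z : ℂ,
      (∫ t : ℝ, (((t ^ 2 + (1 + ‖z‖ ^ 2) ^ 2) ^ 2)⁻¹)) = π / 2 * ((1 + ‖z‖ ^ 2) ^ 3)⁻¹ := by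
    intro z
    rw [jlAux_integral_slice (hz z), ← div_div, div_eq_mul_inv]
  have houter : Integrable fun z : ℂ => π / 2 * ((1 + ‖z‖ ^ 2) ^ 3)⁻¹ := by
    have h6 : ((Module.finrank ℝ ℂ : ℝ)) < 6 := by
      rw [Complex.finrank_real_complex]; norm_num
    have h := (integrable_rpow_neg_one_add_norm_sq (E := ℂ) (μ := volume) (r := 6) h6).const_mul
      (π / 2)
    have key : ∀ z : ℂ, ((1:ℝ) + ‖z‖ ^ 2) ^ ((-6 : ℝ) / 2) = ((1 + ‖z‖ ^ 2) ^ 3)⁻¹ := by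
      intro z
      rw [show (-6 : ℝ) / 2 = -((3:ℕ):ℝ) by norm_num, Real.rpow_neg (hz z).le,
        Real.rpow_natCast]
    simpa only [key] using h
  have hint : Integrable
      (fun p : ℂ × ℝ => (((p.2 ^ 2 + (1 + ‖p.1‖ ^ 2) ^ 2) ^ 2)⁻¹))
      ((volume : Measure ℂ).prod (volume : Measure ℝ)) := by
    rw [MeasureTheory.integrable_prod_iff hmeas]
    constructor
    · exact Eventually.of_forall fun z => hslice z
    · refine houter.congr (Eventually.of_forall fun z => ?_)
      rw [eq_comm]
      calc (∫ t : ℝ, ‖(((t ^ 2 + (1 + ‖z‖ ^ 2) ^ 2) ^ 2)⁻¹)‖)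
          = ∫ t : ℝ, (((t ^ 2 + (1 + ‖z‖ ^ 2) ^ 2) ^ 2)⁻¹) := by
            congr 1; funext t; exact norm_of_nonneg (by positivity)
        _ = π / 2 * ((1 + ‖z‖ ^ 2) ^ 3)⁻¹ := hsliceval z
  calc ∫ p : ℂ × ℝ, (((p.2 ^ 2 + (1 + ‖p.1‖ ^ 2) ^ 2) ^ 2)⁻¹)
      = ∫ z : ℂ, ∫ t : ℝ, (((t ^ 2 + (1 + ‖z‖ ^ 2) ^ 2) ^ 2)⁻¹) := by
        exact MeasureTheory.integral_prod _ hint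
    _ = ∫ z : ℂ, π / 2 * ((1 + ‖z‖ ^ 2) ^ 3)⁻¹ := by
        congr 1; funext z; exact hsliceval z
    _ = π / 2 * ∫ z : ℂ, ((1 + ‖z‖ ^ 2) ^ 3)⁻¹ := MeasureTheory.integral_const_mul _ _
    _ = π ^ 2 / 4 := by rw [jlAux_integral_complex]; ring
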